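/- Define polynomials P_n(x) and Q_m(y) in ℝ[x], ℝ[y] by P_0 = 1, P_n(x) = (x-α)(x-αβ)^(n-1) for n ≥ 1, and Q_0 = 1, Q_m(y) = (y-β)(y-αβ)^(m-1) for m ≥ 1. Let B : ℕ → ℕ → ℝ be the bi-moment matrix with B(n,0) = α^n, B(0,m) = β^m, B(n,m) = αβ(B(n,m-1)+B(n-1,m)) for n,m ≥ 1, and define L(P ⊗ Q) = Σ_{i,j} p_i q_j B(i,j) where p_i, q_j are the coefficients of P and Q. Then L(P_n ⊗ Q_m) = 0 whenever n ≠ m, and L(P_n ⊗ Q_n) = (αβ)^(2n-1)(α+β-1) for n ≥ 1, L(P_0 ⊗ Q_0) = 1. -/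

import Mathlib

open Polynomial

/-- The bilinear form determined by the bi-moment matrix `B`:
`L(x^i ⊗ y^j) = B i j`, extended bilinearly. -/
def Lform (B : ℕ → ℕ → ℝ) (P Q : Polynomial ℝ) : ℝ :=
  ∑ i ∈ P.support, ∑ j ∈ Q.support, P.coeff i * Q.coeff j * B i j

lemma Lform_eq_sum (B : ℕ → ℕ → ℝ) (P Q : Polynomial ℝ) {s t : Finset ℕ}
    (hs : P.support ⊆ s) (ht : Q.support ⊆ t) :
    Lform B P Q = ∑ i ∈ s, ∑ j ∈ t, P.coeff i * Q.coeff j * B i j := by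
  unfold Lform
  rw [Finset.sum_subset hs]
  · refine Finset.sum_congr rfl fun i _ => ?_
    refine Finset.sum_subset ht fun j _ hj => ?_
    simp [Polynomial.notMem_support_iff.mp hj]
  · intro i _ hi
    simp [Polynomial.notMem_support_iff.mp hi]

lemma Lform_congr {B1 B2 : ℕ → ℕ → ℝ} (h : ∀ i j, B1 i j = B2 i j)
    (P Q : Polynomial ℝ) : Lform B1 P Q = Lform B2 P Q := by
  unfold Lform
  exact Finset.sum_congr rfl fun i _ => Finset.sum_congr rfl fun j _ => by rw [h]

lemma Lform_smul_B (a : ℝ) (B : ℕ → ℕ → ℝ) (P Q : Polynomial ℝ) :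
    Lform (fun i j => a * B i j) P Q = a * Lform B P Q := by
  unfold Lform
  rw [Finset.mul_sum]
  refine Finset.sum_congr rfl fun i _ => ?_
  rw [Finset.mul_sum]
  exact Finset.sum_congr rfl fun j _ => by ring

lemma Lform_sub_B (c : ℝ) (B1 B2 : ℕ → ℕ → ℝ) (P Q : Polynomial ℝ) :
    Lform (fun i j => B1 i j - c * B2 i j) P Q = Lform B1 P Q - c * Lform B2 P Q := by
  unfold Lform
  rw [Finset.mul_sum, ← Finset.sum_sub_distrib]
  refine Finset.sum_congr rfl fun i _ => ?_
  rw [Finset.mul_sum, ← Finset.sum_sub_distrib]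
  exact Finset.sum_congr rfl fun j _ => by ring

lemma Lform_swap (B : ℕ → ℕ → ℝ) (P Q : Polynomial ℝ) :
    Lform B P Q = Lform (fun i j => B j i) Q P := by
  unfold Lform
  rw [Finset.sum_comm]
  exact Finset.sum_congr rfl fun j _ => Finset.sum_congr rfl fun i _ => by ring

lemma Lform_X_mul (B : ℕ → ℕ → ℝ) (P Q : Polynomial ℝ) :
    Lform B (X * P) Q = Lform (fun i j => B (i + 1) j) P Q := by
  have hs : (X * P).support ⊆ Finset.range (P.natDegree + 1 + 1) := by
    refine Finset.Subset.trans (X * P).supp_subset_range_natDegree_succ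
      (Finset.range_subset_range.mpr ?_)
    have h := Polynomial.natDegree_mul_le (p := (X : Polynomial ℝ)) (q := P)
    have hX : (X : Polynomial ℝ).natDegree = 1 := Polynomial.natDegree_X
    omega
  rw [Lform_eq_sum B (X * P) Q hs Finset.Subset.rfl,
      Lform_eq_sum (fun i j => B (i + 1) j) P Q P.supp_subset_range_natDegree_succ
        Finset.Subset.rfl,
      Finset.sum_range_succ']
  simp [Polynomial.coeff_X_mul]

lemma Lform_sub_left (B : ℕ → ℕ → ℝ) (P1 P2 Q : Polynomial ℝ) :
    Lform B (P1 - P2) Q = Lform B P1 Q - Lform B P2 Q := by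
  have h1 : P1.support ⊆ P1.support ∪ P2.support := Finset.subset_union_left
  have h2 : P2.support ⊆ P1.support ∪ P2.support := Finset.subset_union_right
  have h3 : (P1 - P2).support ⊆ P1.support ∪ P2.support := by
    intro i hi
    by_contra hc
    simp only [Finset.mem_union, Polynomial.mem_support_iff, not_or, not_not] at hc
    simp [Polynomial.mem_support_iff, Polynomial.coeff_sub, hc.1, hc.2] at hi
  rw [Lform_eq_sum B (P1 - P2) Q h3 Finset.Subset.rfl,
      Lform_eq_sum B P1 Q h1 Finset.Subset.rfl,
      Lform_eq_sum B P2 Q h2 Finset.Subset.rfl, ← Finset.sum_sub_distrib]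
  refine Finset.sum_congr rfl fun i _ => ?_
  rw [← Finset.sum_sub_distrib]
  refine Finset.sum_congr rfl fun j _ => by
    rw [Polynomial.coeff_sub]; ring

lemma Lform_C_mul_left (B : ℕ → ℕ → ℝ) (a : ℝ) (P Q : Polynomial ℝ) :
    Lform B (C a * P) Q = a * Lform B P Q := by
  have hs : (C a * P).support ⊆ P.support := by
    rw [← Polynomial.smul_eq_C_mul]; exact Polynomial.support_smul a P
  rw [Lform_eq_sum B (C a * P) Q hs Finset.Subset.rfl]
  unfold Lform
  rw [Finset.mul_sum]
  refine Finset.sum_congr rfl fun i _ => ?_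
  rw [Finset.mul_sum]
  exact Finset.sum_congr rfl fun j _ => by rw [Polynomial.coeff_C_mul]; ring

lemma Lform_shift_left (B : ℕ → ℕ → ℝ) (c : ℝ) (P Q : Polynomial ℝ) :
    Lform B ((X - C c) * P) Q = Lform (fun i j => B (i + 1) j - c * B i j) P Q := by
  rw [sub_mul, Lform_sub_left, Lform_X_mul, Lform_C_mul_left, Lform_sub_B]

lemma Lform_shift_right (B : ℕ → ℕ → ℝ) (c : ℝ) (P Q : Polynomial ℝ) :
    Lform B P ((X - C c) * Q) = Lform (fun i j => B i (j + 1) - c * B i j) P Q := by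
  rw [Lform_swap, Lform_shift_left, Lform_swap (fun i j => _)]

lemma support_one_eq : ((1 : Polynomial ℝ)).support = {0} := by
  rw [← Polynomial.C_1]; exact Polynomial.support_C one_ne_zero

lemma Lform_one_left (B : ℕ → ℕ → ℝ) (Q : Polynomial ℝ) :
    Lform B 1 Q = ∑ j ∈ Q.support, Q.coeff j * B 0 j := by
  unfold Lform
  rw [support_one_eq, Finset.sum_singleton]
  exact Finset.sum_congr rfl fun j _ => by simp

lemma Lform_one_one (B : ℕ → ℕ → ℝ) : Lform B 1 1 = B 0 0 := by
  rw [Lform_one_left, support_one_eq, Finset.sum_singleton]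
  simp

lemma Lform_master (a b : ℝ) (B : ℕ → ℕ → ℝ)
    (hB3 : ∀ n m, B (n + 1) (m + 1) = a * b * (B (n + 1) m + B n (m + 1)))
    (P Q : Polynomial ℝ) :
    Lform B ((X - C (a * b)) * P) ((X - C (a * b)) * Q) = (a * b) ^ 2 * Lform B P Q := by
  rw [Lform_shift_left, Lform_shift_right, ← Lform_smul_B]
  refine Lform_congr (fun i j => ?_) P Q
  have h := hB3 i j
  show (B (i + 1) (j + 1) - a * b * B i (j + 1)) - a * b * (B (i + 1) j - a * b * B i j)
      = (a * b) ^ 2 * B i j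
  linear_combination h

lemma Lform_key2 (a b : ℝ) (B : ℕ → ℕ → ℝ)
    (hB2 : ∀ m, B 0 m = b ^ m)
    (hB3 : ∀ n m, B (n + 1) (m + 1) = a * b * (B (n + 1) m + B n (m + 1)))
    (Q : Polynomial ℝ) :
    Lform B (X - C a) ((X - C (a * b)) * Q) = a * b * (a + b - 1) * Q.eval b := by
  rw [show (X - C a : Polynomial ℝ) = (X - C a) * 1 from (mul_one _).symm,
      Lform_shift_left, Lform_shift_right, Lform_one_left,
      Polynomial.eval_eq_sum, Polynomial.sum_def, Finset.mul_sum]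
  refine Finset.sum_congr rfl fun j _ => ?_
  show Q.coeff j * ((B 1 (j + 1) - a * B 0 (j + 1)) - a * b * (B 1 j - a * B 0 j))
      = a * b * (a + b - 1) * (Q.coeff j * b ^ j)
  have h3 := hB3 0 j
  have h2 := hB2 j
  have h2' := hB2 (j + 1)
  rw [h3, h2, h2']
  ring

lemma Lform_key3 (a b : ℝ) (B : ℕ → ℕ → ℝ)
    (hB1 : ∀ n, B n 0 = a ^ n)
    (hB3 : ∀ n m, B (n + 1) (m + 1) = a * b * (B (n + 1) m + B n (m + 1)))
    (P : Polynomial ℝ) :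
    Lform B ((X - C (a * b)) * P) (X - C b) = a * b * (a + b - 1) * P.eval a := by
  have h := Lform_key2 b a (fun i j => B j i) (fun m => hB1 m)
    (fun n m => by linear_combination hB3 m n) P
  rw [Lform_swap, mul_comm a b, h]
  ring

lemma Lform_base (a b : ℝ) (B : ℕ → ℕ → ℝ)
    (hB1 : ∀ n, B n 0 = a ^ n) (hB2 : ∀ m, B 0 m = b ^ m)
    (hB3 : ∀ n m, B (n + 1) (m + 1) = a * b * (B (n + 1) m + B n (m + 1))) :
    Lform B (X - C a) (X - C b) = a * b * (a + b - 1) := by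
  rw [show (X - C a : Polynomial ℝ) = (X - C a) * 1 from (mul_one _).symm,
      show (X - C b : Polynomial ℝ) = (X - C b) * 1 from (mul_one _).symm,
      Lform_shift_left, Lform_shift_right, Lform_one_one]
  show (B 1 1 - a * B 0 1) - b * (B 1 0 - a * B 0 0) = a * b * (a + b - 1)
  have h3 := hB3 0 0
  have h10 := hB1 1
  have h00 := hB1 0
  have h01 := hB2 1
  rw [h3, h10, h00, h01]
  ring

lemma Lform_diag (a b : ℝ) (B : ℕ → ℕ → ℝ)
    (hB1 : ∀ n, B n 0 = a ^ n) (hB2 : ∀ m, B 0 m = b ^ m)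
    (hB3 : ∀ n m, B (n + 1) (m + 1) = a * b * (B (n + 1) m + B n (m + 1))) :
    ∀ n m : ℕ,
      Lform B ((X - C (a * b)) ^ n * (X - C a)) ((X - C (a * b)) ^ m * (X - C b)) =
        if n = m then (a * b) ^ (2 * n + 1) * (a + b - 1) else 0 := by
  intro n
  induction n with
  | zero =>
    intro m
    cases m with
    | zero =>
      simp only [pow_zero, one_mul]
      rw [if_pos trivial, Lform_base a b B hB1 hB2 hB3]
      ring
    | succ m' =>
      simp only [pow_zero, one_mul, pow_succ, if_neg (by omega : ¬ (0 : ℕ) = m' + 1)]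
      rw [show (X - C (a * b)) ^ m' * (X - C (a * b)) * (X - C b)
            = (X - C (a * b)) * ((X - C (a * b)) ^ m' * (X - C b)) by ring,
          Lform_key2 a b B hB2 hB3]
      simp
  | succ n' ih =>
    intro m
    cases m with
    | zero =>
      simp only [pow_zero, one_mul, pow_succ, if_neg (by omega : ¬ n' + 1 = 0)]
      rw [show (X - C (a * b)) ^ n' * (X - C (a * b)) * (X - C a)
            = (X - C (a * b)) * ((X - C (a * b)) ^ n' * (X - C a)) by ring,
          Lform_key3 a b B hB1 hB3]
      simp
    | succ m' =>
      rw [show (X - C (a * b)) ^ (n' + 1) * (X - C a)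
            = (X - C (a * b)) * ((X - C (a * b)) ^ n' * (X - C a)) by ring,
          show (X - C (a * b)) ^ (m' + 1) * (X - C b)
            = (X - C (a * b)) * ((X - C (a * b)) ^ m' * (X - C b)) by ring,
          Lform_master a b B hB3, ih m']
      by_cases h : n' = m'
      · rw [if_pos h, if_pos (by omega : n' + 1 = m' + 1)]
        rw [show 2 * (n' + 1) + 1 = 2 * n' + 1 + 2 by ring, pow_add]
        ring
      · rw [if_neg h, if_neg (by omega : ¬ n' + 1 = m' + 1), mul_zero]

lemma Lform_eval_right (a : ℝ) (B : ℕ → ℕ → ℝ) (hB1 : ∀ n, B n 0 = a ^ n)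
    (P : Polynomial ℝ) : Lform B P 1 = P.eval a := by
  rw [Lform_swap, Lform_one_left, Polynomial.eval_eq_sum, Polynomial.sum_def]
  exact Finset.sum_congr rfl fun i _ => by rw [hB1]

lemma Lform_eval_left (b : ℝ) (B : ℕ → ℕ → ℝ) (hB2 : ∀ m, B 0 m = b ^ m)
    (Q : Polynomial ℝ) : Lform B 1 Q = Q.eval b := by
  rw [Lform_one_left, Polynomial.eval_eq_sum, Polynomial.sum_def]
  exact Finset.sum_congr rfl fun j _ => by rw [hB2]

theorem stmt_4 (α β : ℝ) (B : ℕ → ℕ → ℝ)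
    (hB1 : ∀ n, B n 0 = α ^ n) (hB2 : ∀ m, B 0 m = β ^ m)
    (hB3 : ∀ n m, B (n + 1) (m + 1) = α * β * (B (n + 1) m + B n (m + 1)))
    (P Q : ℕ → Polynomial ℝ)
    (hP0 : P 0 = 1) (hP : ∀ n, 1 ≤ n → P n = (X - C α) * (X - C (α * β)) ^ (n - 1))
    (hQ0 : Q 0 = 1) (hQ : ∀ m, 1 ≤ m → Q m = (X - C β) * (X - C (α * β)) ^ (m - 1)) :
    (∀ n m, n ≠ m → Lform B (P n) (Q m) = 0) ∧
      (∀ n, 1 ≤ n → Lform B (P n) (Q n) = (α * β) ^ (2 * n - 1) * (α + β - 1)) ∧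
      Lform B (P 0) (Q 0) = 1 := by
  have hdiag := Lform_diag α β B hB1 hB2 hB3
  refine ⟨?_, ?_, ?_⟩
  · intro n m hnm
    match n, m with
    | 0, 0 => exact absurd rfl hnm
    | 0, m + 1 =>
      rw [hP0, hQ (m + 1) (by omega), Lform_eval_left β B hB2]
      simp
    | n + 1, 0 =>
      rw [hQ0, hP (n + 1) (by omega), Lform_eval_right α B hB1]
      simp
    | n + 1, m + 1 =>
      rw [hP (n + 1) (by omega), hQ (m + 1) (by omega)]
      rw [mul_comm (X - C α), mul_comm (X - C β)]
      simp only [Nat.add_sub_cancel]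
      rw [hdiag n m, if_neg (by omega)]
  · intro n hn
    rw [hP n hn, hQ n hn, mul_comm (X - C α), mul_comm (X - C β), hdiag (n - 1) (n - 1),
        if_pos rfl, show 2 * (n - 1) + 1 = 2 * n - 1 by omega]
  · rw [hP0, hQ0, Lform_one_one, hB1 0, pow_zero]
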